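/- Weak duality for the bid-discount revenue problem: let Pᵢ(α) denote the expected payment of buyer i under parameter α ∈ [0,1]ⁿ and W(α) the seller's revenue (both linear combinations of indicator integrals as defined below). Then the optimal value of max{W(α) : α ∈ [0,1]ⁿ, Pᵢ(α) ≤ ρᵢ ∀i} is at most min_{τ∈[0,1]ⁿ} ( E_q[max_i ((1-τᵢ)ṽᵢ(qᵢ) - λ)⁺] + Σᵢ τᵢρᵢ ). -/
import Mathlib


open MeasureTheory Set

/-- The box `[0,1]ⁿ` of quantile/parameter profiles. -/
def box (n : ℕ) : Set (Fin n → ℝ) := Set.univ.pi fun _ => Icc (0:ℝ) 1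

/-- Winning indicator of buyer `i` in the bid-discount first-price auction:
`Φᵢ(α,q) = 1` iff `αᵢ ṽᵢ(qᵢ) ≥ max(max_{j≠i} αⱼ ṽⱼ(qⱼ), λ)`. -/
noncomputable def Phi (n : ℕ) (v : Fin n → ℝ → ℝ) (lam : ℝ) (i : Fin n)
    (α q : Fin n → ℝ) : ℝ :=
  if max (⨆ j, if j = i then 0 else α j * v j (q j)) lam ≤ α i * v i (q i) then 1 else 0

/-- Expected payment of buyer `i` under parameter `α`:
`Pᵢ(α) = ∫_{[0,1]ⁿ} ṽᵢ(qᵢ) Φᵢ(α,q) dq`. -/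
noncomputable def payment (n : ℕ) (v : Fin n → ℝ → ℝ) (lam : ℝ) (i : Fin n)
    (α : Fin n → ℝ) : ℝ :=
  ∫ q in box n, v i (q i) * Phi n v lam i α q

/-- Seller's revenue: `W(α) = Σᵢ ∫_{[0,1]ⁿ} (ṽᵢ(qᵢ) - λ) Φᵢ(α,q) dq`. -/
noncomputable def revenue (n : ℕ) (v : Fin n → ℝ → ℝ) (lam : ℝ)
    (α : Fin n → ℝ) : ℝ :=
  ∑ i, ∫ q in box n, (v i (q i) - lam) * Phi n v lam i α q

/-- Lagrangian dual objective:
`E_q[maxᵢ ((1-τᵢ)ṽᵢ(qᵢ) - λ)⁺] + Σᵢ τᵢ ρᵢ`. -/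
noncomputable def dualObj (n : ℕ) (v : Fin n → ℝ → ℝ) (lam : ℝ) (ρ : Fin n → ℝ)
    (τ : Fin n → ℝ) : ℝ :=
  (∫ q in box n, ⨆ i, max 0 ((1 - τ i) * v i (q i) - lam)) + ∑ i, τ i * ρ i

/-- Weak duality for the bid-discount revenue problem: the revenue of every
budget-feasible `α ∈ [0,1]ⁿ` is at most the dual objective at every `τ ∈ [0,1]ⁿ`; hence
the optimal primal value is at most the minimal dual value. -/
lemma box_measurable (n : ℕ) : MeasurableSet (box n) :=
  MeasurableSet.univ_pi fun _ => measurableSet_Icc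

lemma volume_box (n : ℕ) : volume (box n) = 1 := by
  rw [box, volume_pi_pi]
  simp [Real.volume_Icc]

lemma finite_box (n : ℕ) : IsFiniteMeasure (volume.restrict (box n)) := by
  constructor
  rw [Measure.restrict_apply_univ, volume_box]
  exact ENNReal.one_lt_top

lemma phi_mem (n : ℕ) (w : Fin n → ℝ → ℝ) (lam : ℝ) (i : Fin n) (α q : Fin n → ℝ) :
    Phi n w lam i α q = 0 ∨ Phi n w lam i α q = 1 := by
  unfold Phi; split <;> simp

lemma phi_eq_one (n : ℕ) {w : Fin n → ℝ → ℝ} {lam : ℝ} {i : Fin n} {α q : Fin n → ℝ}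
    (h : Phi n w lam i α q = 1) :
    max (⨆ j, if j = i then 0 else α j * w j (q j)) lam ≤ α i * w i (q i) := by
  by_contra hc
  rw [Phi, if_neg hc] at h
  norm_num at h

lemma phi_measurable (n : ℕ) (w : Fin n → ℝ → ℝ) (lam : ℝ) (i : Fin n) (α : Fin n → ℝ)
    (hw : ∀ j, Monotone (w j)) : Measurable (Phi n w lam i α) := by
  have hm : ∀ j : Fin n, Measurable (fun q : Fin n → ℝ => α j * w j (q j)) :=
    fun j => ((hw j).measurable.comp (measurable_pi_apply j)).const_mul _
  unfold Phi
  refine Measurable.ite ?_ measurable_const measurable_const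
  refine measurableSet_le (Measurable.max ?_ measurable_const) (hm i)
  refine Measurable.iSup fun j => ?_
  by_cases h : j = i
  · simp only [if_pos h]; exact measurable_const
  · simp only [if_neg h]; exact hm j

lemma integrable_box {n : ℕ} {f : (Fin n → ℝ) → ℝ} (hf : Measurable f) (B : ℝ)
    (hB : ∀ q ∈ box n, |f q| ≤ B) : IntegrableOn f (box n) := by
  haveI := finite_box n
  refine Integrable.mono' (integrable_const B) hf.aestronglyMeasurable ?_
  filter_upwards [ae_restrict_mem (box_measurable n)] with q hq
  simpa using hB q hq

lemma graph_null (n : ℕ) (i j : Fin n) (hij : j ≠ i) (g : ℝ → ℝ) (hg : Measurable g) :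
    volume {q : Fin n → ℝ | q i = g (q j)} = 0 := by
  classical
  have hmp := MeasureTheory.measurePreserving_piEquivPiSubtypeProd
    (fun _ : Fin n => (volume : Measure ℝ)) (fun k => k ≠ i)
  set e := MeasurableEquiv.piEquivPiSubtypeProd (fun _ : Fin n => ℝ) (fun k => k ≠ i) with he
  set s : Set ((∀ _ : {k : Fin n // k ≠ i}, ℝ) × (∀ _ : {k : Fin n // ¬ k ≠ i}, ℝ)) :=
    {p | p.2 ⟨i, by simp⟩ = g (p.1 ⟨j, hij⟩)} with hs
  have hsm : MeasurableSet s := by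
    apply measurableSet_eq_fun
    · exact (measurable_pi_apply _).comp measurable_snd
    · exact hg.comp ((measurable_pi_apply _).comp measurable_fst)
  have hpre : {q : Fin n → ℝ | q i = g (q j)} = e ⁻¹' s := rfl
  rw [hpre, MeasureTheory.volume_pi, hmp.measure_preimage hsm.nullMeasurableSet]
  rw [MeasureTheory.Measure.measure_prod_null hsm]
  filter_upwards with x
  have : Prod.mk x ⁻¹' s
      = {y : (∀ _ : {k : Fin n // ¬ k ≠ i}, ℝ) | y ⟨i, by simp⟩ = g (x ⟨j, hij⟩)} := rfl
  rw [this]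
  exact MeasureTheory.Measure.pi_hyperplane _ _ _

lemma bid_le {n : ℕ} {w : Fin n → ℝ → ℝ} {lam : ℝ} {i j : Fin n} {α q : Fin n → ℝ}
    (hij : j ≠ i) (h : Phi n w lam i α q = 1) :
    α j * w j (q j) ≤ α i * w i (q i) := by
  have h1 := phi_eq_one n h
  refine le_trans ?_ (le_trans (le_max_left _ lam) h1)
  have := le_ciSup (f := fun j' : Fin n => if j' = i then 0 else α j' * w j' (q j'))
    (Set.Finite.bddAbove (Set.finite_range _)) j
  rwa [if_neg hij] at this

lemma tie_null (n : ℕ) (w : Fin n → ℝ → ℝ) (lam : ℝ)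
    (hwm : ∀ k, Monotone (w k))
    (hws : ∀ k, StrictMonoOn (w k) (Icc (0:ℝ) 1))
    (hwr : ∀ k x, w k x ∈ Icc (0:ℝ) 1) (hlam : 0 < lam)
    (α : Fin n → ℝ) (i j : Fin n) (hij : i ≠ j) :
    volume {q | q ∈ box n ∧ Phi n w lam i α q = 1 ∧ Phi n w lam j α q = 1} = 0 := by
  by_cases hαi : α i ≤ 0
  · refine measure_mono_null (t := ∅) ?_ (by simp)
    rintro q ⟨-, h1, -⟩
    have := le_trans (le_max_right _ lam) (phi_eq_one n h1)
    have hwi := hwr i (q i)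
    exact absurd rfl (by nlinarith [hwi.1, hwi.2] : ¬ (0:ℝ) = 0)
  push_neg at hαi
  by_cases hαj : α j ≤ 0
  · refine measure_mono_null (t := ∅) ?_ (by simp)
    rintro q ⟨-, -, h2⟩
    have := le_trans (le_max_right _ lam) (phi_eq_one n h2)
    have hwj := hwr j (q j)
    exact absurd rfl (by nlinarith [hwj.1, hwj.2] : ¬ (0:ℝ) = 0)
  push_neg at hαj
  set c : ℝ := α j / α i with hc
  have hc0 : 0 ≤ c := le_of_lt (div_pos hαj hαi)
  set g : ℝ → ℝ := fun y => sSup {x | x ∈ Icc (0:ℝ) 1 ∧ w i x ≤ c * w j y} with hg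
  have hgmono : Monotone g := by
    intro y y' hy
    have hsub : {x | x ∈ Icc (0:ℝ) 1 ∧ w i x ≤ c * w j y}
        ⊆ {x | x ∈ Icc (0:ℝ) 1 ∧ w i x ≤ c * w j y'} := fun x ⟨hx1, hx2⟩ =>
      ⟨hx1, le_trans hx2 (mul_le_mul_of_nonneg_left (hwm j hy) hc0)⟩
    rcases eq_empty_or_nonempty {x | x ∈ Icc (0:ℝ) 1 ∧ w i x ≤ c * w j y} with he | hne
    · rw [hg]; simp only []
      rw [he, Real.sSup_empty]
      exact Real.sSup_nonneg (fun x hx => hx.1.1)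
    · exact csSup_le_csSup ⟨1, fun x ⟨hx1, _⟩ => hx1.2⟩ hne hsub
  refine measure_mono_null (t := {q : Fin n → ℝ | q i = g (q j)}) ?_
    (graph_null n i j (Ne.symm hij) g hgmono.measurable)
  rintro q ⟨hqbox, h1, h2⟩
  have hqi : q i ∈ Icc (0:ℝ) 1 := hqbox i (mem_univ i)
  have heq : α i * w i (q i) = α j * w j (q j) :=
    le_antisymm (bid_le hij h2) (bid_le (Ne.symm hij) h1)
  have heqc : w i (q i) = c * w j (q j) := by
    rw [hc]; field_simp; linarith [heq]
  show q i = g (q j)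
  have hmem : q i ∈ {x | x ∈ Icc (0:ℝ) 1 ∧ w i x ≤ c * w j (q j)} := ⟨hqi, heqc.le⟩
  have hub : ∀ x ∈ {x | x ∈ Icc (0:ℝ) 1 ∧ w i x ≤ c * w j (q j)}, x ≤ q i := by
    intro x hx
    by_contra hlt
    push_neg at hlt
    have := hws i hqi hx.1 hlt
    rw [heqc] at this
    linarith [hx.2, this]
  exact (le_antisymm (csSup_le ⟨q i, hmem⟩ hub)
    (le_csSup ⟨1, fun x hx => hx.1.2⟩ hmem)).symm


theorem weak_duality_BDFPA (n : ℕ) (v : Fin n → ℝ → ℝ) (lam : ℝ) (ρ : Fin n → ℝ)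
    (hv : ∀ i, StrictMonoOn (v i) (Icc (0:ℝ) 1))
    (hvr : ∀ i, ∀ q ∈ Icc (0:ℝ) 1, v i q ∈ Icc (0:ℝ) 1)
    (hlam : lam ∈ Ioo (0:ℝ) 1) (hρ : ∀ i, ρ i ∈ Ioc (0:ℝ) 1) :
    ∀ α ∈ box n, (∀ i, payment n v lam i α ≤ ρ i) →
      ∀ τ ∈ box n, revenue n v lam α ≤ dualObj n v lam ρ τ := by
  intro α hα hP τ hτ
  classical
  set w : Fin n → ℝ → ℝ := fun k x => v k (max 0 (min x 1)) with hwdef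
  have hclamp : ∀ x : ℝ, max 0 (min x 1) ∈ Icc (0:ℝ) 1 := fun x =>
    ⟨le_max_left _ _, max_le (by norm_num) (min_le_right _ _)⟩
  have hclamp_eq : ∀ x ∈ Icc (0:ℝ) 1, max 0 (min x 1) = x := fun x hx => by
    rw [min_eq_left hx.2, max_eq_right hx.1]
  have hwm : ∀ k, Monotone (w k) := fun k a b hab =>
    (hv k).monotoneOn (hclamp a) (hclamp b)
      (max_le_max le_rfl (min_le_min hab le_rfl))
  have hws : ∀ k, StrictMonoOn (w k) (Icc (0:ℝ) 1) := by
    intro k a ha b hb hab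
    show v k (max 0 (min a 1)) < v k (max 0 (min b 1))
    rw [hclamp_eq a ha, hclamp_eq b hb]
    exact hv k ha hb hab
  have hwr : ∀ k x, w k x ∈ Icc (0:ℝ) 1 := fun k x => hvr k _ (hclamp x)
  have hweq : ∀ k, ∀ x ∈ Icc (0:ℝ) 1, w k x = v k x := fun k x hx => by
    show v k (max 0 (min x 1)) = v k x
    rw [hclamp_eq x hx]
  have hPhieq : ∀ i (q : Fin n → ℝ), q ∈ box n → Phi n v lam i α q = Phi n w lam i α q := by
    intro i q hq
    unfold Phi
    have hvw : ∀ j, v j (q j) = w j (q j) := fun j => (hweq j _ (hq j (mem_univ j))).symm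
    have h1 : (⨆ j, if j = i then (0:ℝ) else α j * v j (q j))
        = ⨆ j, if j = i then (0:ℝ) else α j * w j (q j) :=
      iSup_congr fun j => by rw [hvw j]
    rw [h1, hvw i]
  have hτm : ∀ k, τ k ∈ Icc (0:ℝ) 1 := fun k => hτ k (mem_univ k)
  have hmw : ∀ k, Measurable (fun q : Fin n → ℝ => w k (q k)) :=
    fun k => (hwm k).measurable.comp (measurable_pi_apply k)
  have hphi_m : ∀ i, Measurable (Phi n w lam i α) := fun i => phi_measurable n w lam i α hwm
  -- integrability
  have habs : ∀ (i : Fin n) (q : Fin n → ℝ) (x : ℝ), |x| ≤ 2 → |x * Phi n w lam i α q| ≤ 2 := by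
    intro i q x hx
    rcases phi_mem n w lam i α q with h | h <;> rw [h]
    · simp
    · simpa using hx
  have intF : ∀ i, IntegrableOn (fun q => w i (q i) * Phi n w lam i α q) (box n) := by
    intro i
    refine integrable_box ((hmw i).mul (hphi_m i)) 2 fun q _ => habs i q _ ?_
    have := hwr i (q i)
    rw [abs_le]; constructor <;> nlinarith [this.1, this.2]
  have intH : ∀ i, IntegrableOn
      (fun q => ((1 - τ i) * w i (q i) - lam) * Phi n w lam i α q) (box n) := by
    intro i
    refine integrable_box ((((hmw i).const_mul _).sub measurable_const).mul (hphi_m i)) 2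
      fun q _ => habs i q _ ?_
    have h1 := hwr i (q i); have h2 := hτm i
    rw [abs_le]; constructor <;> nlinarith [h1.1, h1.2, h2.1, h2.2, hlam.1, hlam.2]
  have hSm : Measurable (fun q : Fin n → ℝ => ⨆ i, max 0 ((1 - τ i) * w i (q i) - lam)) :=
    Measurable.iSup fun i => measurable_const.max (((hmw i).const_mul _).sub measurable_const)
  have intS : IntegrableOn (fun q : Fin n → ℝ => ⨆ i, max 0 ((1 - τ i) * w i (q i) - lam))
      (box n) := by
    refine integrable_box hSm 2 fun q _ => ?_
    rw [abs_le]
    constructor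
    · refine le_trans (by norm_num) (Real.iSup_nonneg fun i => le_max_left _ _)
    · refine Real.iSup_le (fun i => max_le (by norm_num) ?_) (by norm_num)
      have h1 := hwr i (q i); have h2 := hτm i
      nlinarith [h1.1, h1.2, h2.1, h2.2, hlam.1, hlam.2]
  -- congruences to v
  have hrev : revenue n v lam α = ∑ i, ∫ q in box n, (w i (q i) - lam) * Phi n w lam i α q := by
    unfold revenue
    refine Finset.sum_congr rfl fun i _ => ?_
    refine setIntegral_congr_fun (box_measurable n) fun q hq => ?_
    rw [hweq i _ (hq i (mem_univ i)), hPhieq i q hq]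
  have hpay : ∀ i, (∫ q in box n, w i (q i) * Phi n w lam i α q) = payment n v lam i α := by
    intro i
    unfold payment
    refine setIntegral_congr_fun (box_measurable n) fun q hq => ?_
    rw [hweq i _ (hq i (mem_univ i)), hPhieq i q hq]
  have hdual : (∫ q in box n, ⨆ i, max 0 ((1 - τ i) * w i (q i) - lam))
      = ∫ q in box n, ⨆ i, max 0 ((1 - τ i) * v i (q i) - lam) := by
    refine setIntegral_congr_fun (box_measurable n) fun q hq => ?_
    exact iSup_congr fun i => by rw [hweq i _ (hq i (mem_univ i))]
  -- split each revenue integral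
  have hsplit : ∀ i, (∫ q in box n, (w i (q i) - lam) * Phi n w lam i α q)
      = (∫ q in box n, ((1 - τ i) * w i (q i) - lam) * Phi n w lam i α q)
        + τ i * ∫ q in box n, w i (q i) * Phi n w lam i α q := by
    intro i
    calc (∫ q in box n, (w i (q i) - lam) * Phi n w lam i α q)
        = ∫ q in box n, (((1 - τ i) * w i (q i) - lam) * Phi n w lam i α q
            + τ i * (w i (q i) * Phi n w lam i α q)) := by
          refine integral_congr_ae ?_
          filter_upwards with q using by ring
      _ = _ := by
          rw [integral_add (intH i) ((intF i).const_mul (τ i)), integral_const_mul]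
  -- a.e. pointwise bound
  have hae : ∀ᵐ q ∂(volume.restrict (box n)),
      (∑ i, ((1 - τ i) * w i (q i) - lam) * Phi n w lam i α q)
        ≤ ⨆ i, max 0 ((1 - τ i) * w i (q i) - lam) := by
    set N := ⋃ (i : Fin n), ⋃ (j : Fin n), ⋃ (_ : i ≠ j),
      {q | q ∈ box n ∧ Phi n w lam i α q = 1 ∧ Phi n w lam j α q = 1} with hNdef
    have hN : volume N = 0 :=
      measure_iUnion_null fun i => measure_iUnion_null fun j => measure_iUnion_null
        fun hij => tie_null n w lam hwm hws hwr hlam.1 α i j hij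
    have h1 : ∀ᵐ q, q ∉ N := measure_eq_zero_iff_ae_notMem.mp hN
    filter_upwards [ae_restrict_of_ae h1, ae_restrict_mem (box_measurable n)] with q hqN hqbox
    by_cases hex : ∃ i₀, Phi n w lam i₀ α q = 1
    · obtain ⟨i₀, hi₀⟩ := hex
      have hothers : ∀ j, j ≠ i₀ → Phi n w lam j α q = 0 := by
        intro j hj
        rcases phi_mem n w lam j α q with h | h
        · exact h
        · exfalso
          apply hqN
          simp only [hNdef, mem_iUnion]
          exact ⟨i₀, j, Ne.symm hj, hqbox, hi₀, h⟩
      have hsum : (∑ i, ((1 - τ i) * w i (q i) - lam) * Phi n w lam i α q)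
          = (1 - τ i₀) * w i₀ (q i₀) - lam := by
        rw [Finset.sum_eq_single i₀]
        · rw [hi₀, mul_one]
        · intro j _ hj; rw [hothers j hj, mul_zero]
        · intro h; exact absurd (Finset.mem_univ i₀) h
      rw [hsum]
      exact le_trans (le_max_right 0 _)
        (le_ciSup (f := fun i => max 0 ((1 - τ i) * w i (q i) - lam))
          (Set.Finite.bddAbove (Set.finite_range _)) i₀)
    · push_neg at hex
      have hz : ∀ i, Phi n w lam i α q = 0 := fun i => (phi_mem n w lam i α q).resolve_right (hex i)
      rw [Finset.sum_eq_zero fun i _ => by rw [hz i, mul_zero]]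
      exact Real.iSup_nonneg fun i => le_max_left _ _
  -- put everything together
  have key : (∑ i, ∫ q in box n, ((1 - τ i) * w i (q i) - lam) * Phi n w lam i α q)
      ≤ ∫ q in box n, ⨆ i, max 0 ((1 - τ i) * w i (q i) - lam) := by
    rw [← integral_finset_sum Finset.univ fun i _ => intH i]
    exact integral_mono_ae (integrable_finset_sum Finset.univ fun i _ => intH i) intS hae
  have budget : (∑ i, τ i * ∫ q in box n, w i (q i) * Phi n w lam i α q) ≤ ∑ i, τ i * ρ i := by
    refine Finset.sum_le_sum fun i _ => ?_
    rw [hpay i]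
    exact mul_le_mul_of_nonneg_left (hP i) (hτm i).1
  rw [hrev]
  unfold dualObj
  rw [← hdual]
  calc (∑ i, ∫ q in box n, (w i (q i) - lam) * Phi n w lam i α q)
      = (∑ i, ∫ q in box n, ((1 - τ i) * w i (q i) - lam) * Phi n w lam i α q)
        + ∑ i, τ i * ∫ q in box n, w i (q i) * Phi n w lam i α q := by
        rw [← Finset.sum_add_distrib]
        exact Finset.sum_congr rfl fun i _ => hsplit i
    _ ≤ _ := add_le_add key budget
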